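/- Suppose α > 0 and β > 0. Then the derivative at ε = 0 of the map ε ↦ V_ε(−√(α² + β²) − ε/(4β²)) equals −(α² + β²)^{3/2}; that is, the value of the perturbed potential at its shifted leftmost critical point satisfies V_ε(−√(α² + β²) − ε/(4β²)) = V₀(−√(α² + β²)) − ε·(α² + β²)^{3/2} + o(ε). Here √ denotes the real square root. -/

import Mathlib

open Asymptotics

/-- the derivative at `ε = 0` of
`ε ↦ V_ε(−√(α²+β²) − ε/(4β²))` equals `−(α²+β²)^(3/2)`; that is,
`V_ε(−√(α²+β²) − ε/(4β²)) = V₀(−√(α²+β²)) − ε·(α²+β²)^(3/2) + o(ε)`. -/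
theorem stmt12 (α β : ℝ) (hα : 0 < α) (hβ : 0 < β)
    (V : ℝ → ℝ → ℝ)
    (hV : ∀ ε x : ℝ, V ε x = x ^ 6 + (-3 * α ^ 2 - (3 / 2) * β ^ 2) * x ^ 4 +
      ε * x ^ 3 + (3 * α ^ 2 * (α ^ 2 + β ^ 2)) * x ^ 2) :
    deriv (fun ε : ℝ => V ε (-Real.sqrt (α ^ 2 + β ^ 2) - ε / (4 * β ^ 2))) 0 =
      -((α ^ 2 + β ^ 2) ^ ((3 : ℝ) / 2)) ∧
    (fun ε : ℝ => V ε (-Real.sqrt (α ^ 2 + β ^ 2) - ε / (4 * β ^ 2)) -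
        (V 0 (-Real.sqrt (α ^ 2 + β ^ 2)) - ε * (α ^ 2 + β ^ 2) ^ ((3 : ℝ) / 2)))
      =o[nhds 0] (fun ε : ℝ => ε) := by
  set s : ℝ := Real.sqrt (α ^ 2 + β ^ 2) with hs
  have ht : (0:ℝ) ≤ α ^ 2 + β ^ 2 := by positivity
  have hs2 : s ^ 2 = α ^ 2 + β ^ 2 := Real.sq_sqrt ht
  have hs3 : s ^ 3 = (α ^ 2 + β ^ 2) ^ ((3:ℝ)/2) := by
    rw [hs, Real.sqrt_eq_rpow, ← Real.rpow_natCast _ 3, ← Real.rpow_mul ht]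
    norm_num
  have hβ2 : (4 * β ^ 2) ≠ 0 := by positivity
  have hx : HasDerivAt (fun ε : ℝ => -s - ε / (4 * β ^ 2)) (-(1 / (4 * β ^ 2))) 0 := by
    have := ((hasDerivAt_id (0:ℝ)).div_const (4 * β ^ 2)).const_sub (-s)
    exact this
  set x : ℝ → ℝ := fun ε : ℝ => -s - ε / (4 * β ^ 2) with hxdef
  have hx0 : x 0 = -s := by simp [hxdef]
  have key : HasDerivAt (fun ε : ℝ => V ε (x ε)) (-((α ^ 2 + β ^ 2) ^ ((3:ℝ)/2))) 0 := by
    have H := (((hx.pow 6).add ((hx.pow 4).const_mul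
        (-3 * α ^ 2 - (3 / 2) * β ^ 2))).add
        ((hasDerivAt_id (0:ℝ)).mul (hx.pow 3))).add
        ((hx.pow 2).const_mul (3 * α ^ 2 * (α ^ 2 + β ^ 2)))
    convert H using 1
    · exact rfl
    · exact rfl
    · funext ε
      rw [hV]
      rfl
    · rw [← hs3]
      simp only [id_eq, Pi.pow_apply, hx0]
      push_cast
      linear_combination ((-(6*s^3) + 6*s*α^2)/(4*β^2)) * hs2
  refine ⟨key.deriv, ?_⟩
  have h := hasDerivAt_iff_isLittleO.mp key
  refine h.congr' ?_ ?_
  · filter_upwards with ε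
    simp only [hx0, sub_zero, smul_eq_mul]
    ring
  · filter_upwards with ε
    simp
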